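/- Matrix-power formula for characteristic polynomials (Corollary 2): for every n ≥ 1 and every z ∈ ℂ, (p_n(z), q_n(z))ᵀ = U_k(z)^{n−1} · U₁(a_1,u_1)(z)·U₁(a_2,u_2)(z)···U₁(a_{k−1},u_{k−1})(z) · (z + a_k, 1)ᵀ. -/

import Mathlib

/-!
Matrix-power formula for characteristic polynomials (Corollary 2):
for every `n ≥ 1` and `z ∈ ℂ`,
`(p_n(z), q_n(z))ᵀ = U_k(z)^{n-1} · U₁(a_1,u_1)(z) ⋯ U₁(a_{k-1},u_{k-1})(z) · (z + a_k, 1)ᵀ`.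
-/

open Matrix

/-- The tridiagonal `k`-Toeplitz matrix `M_N`. -/
noncomputable def kToeplitz (k : ℕ) (a x y : ℕ → ℂ) (N : ℕ) :
    Matrix (Fin N) (Fin N) ℂ :=
  Matrix.of fun i j =>
    if (i : ℕ) = (j : ℕ) then a ((i : ℕ) % k)
    else if (j : ℕ) = (i : ℕ) + 1 then x ((i : ℕ) % k)
    else if (i : ℕ) = (j : ℕ) + 1 then y ((j : ℕ) % k)
    else 0

/-- `p_n(z) = det (z • I_{nk} + M_{nk})`. -/
noncomputable def pPoly (k : ℕ) (a x y : ℕ → ℂ) (n : ℕ) (z : ℂ) : ℂ :=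
  (z • (1 : Matrix (Fin (n * k)) (Fin (n * k)) ℂ) + kToeplitz k a x y (n * k)).det

/-- `q_n(z) = det (z • I_{nk-1} + M'_{nk-1})`, where `M'_{nk-1}` is the submatrix of
`M_{nk}` obtained by deleting its first row and first column. -/
noncomputable def qPoly (k : ℕ) (a x y : ℕ → ℂ) (n : ℕ) (z : ℂ) : ℂ :=
  (z • (1 : Matrix (Fin (n * k - 1)) (Fin (n * k - 1)) ℂ) +
    (kToeplitz k a x y (n * k)).submatrix
      (fun i : Fin (n * k - 1) => (⟨(i : ℕ) + 1, by have := i.isLt; omega⟩ : Fin (n * k)))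
      (fun j : Fin (n * k - 1) => (⟨(j : ℕ) + 1, by have := j.isLt; omega⟩ : Fin (n * k)))).det

/-- The elementary reduction matrix `U₁(a,u)(z) = [[z+a, -u],[1,0]]`. -/
noncomputable def U1 (a u z : ℂ) : Matrix (Fin 2) (Fin 2) ℂ :=
  !![z + a, -u; 1, 0]

/-- The reduction matrix `U_k(z) = U₁(a_1,u_1)(z) ⋯ U₁(a_k,u_k)(z)`
(with the factor `j = 1`, i.e. index `0`, leftmost). -/
noncomputable def Uk (k : ℕ) (a x y : ℕ → ℂ) (z : ℂ) : Matrix (Fin 2) (Fin 2) ℂ :=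
  ((List.range k).map (fun j => U1 (a j) (x j * y j) z)).prod


noncomputable def tri (d s t : ℕ → ℂ) (m : ℕ) : Matrix (Fin m) (Fin m) ℂ :=
  Matrix.of fun i j =>
    if (i : ℕ) = (j : ℕ) then d (i : ℕ)
    else if (j : ℕ) = (i : ℕ) + 1 then s (i : ℕ)
    else if (i : ℕ) = (j : ℕ) + 1 then t (j : ℕ)
    else 0

lemma hsA1 (n:ℕ) (j : Fin n) : (1 : Fin (n+2)).succAbove j.succ = j.succ.succ := by
  rw [Fin.succAbove_of_le_castSucc]; rw [Fin.le_def]; simp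

lemma hsA0 (n:ℕ) : (1 : Fin (n+2)).succAbove 0 = 0 := by
  rw [Fin.succAbove_of_castSucc_lt] <;> simp

lemma tri_det_rec (d s t : ℕ → ℂ) (m : ℕ) :
    (tri d s t (m+2)).det
      = d 0 * (tri (fun i => d (i+1)) (fun i => s (i+1)) (fun i => t (i+1)) (m+1)).det
        - s 0 * t 0 * (tri (fun i => d (i+2)) (fun i => s (i+2)) (fun i => t (i+2)) m).det := by
  rw [Matrix.det_succ_row_zero, Fin.sum_univ_succ, Fin.sum_univ_succ]
  have hz : ∀ j : Fin m, (tri d s t (m+2)) 0 j.succ.succ = 0 := by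
    intro j
    simp [tri]
  have hsum0 : ∑ j : Fin m,
      (-1:ℂ) ^ ((j.succ.succ : Fin (m+2)) : ℕ) * (tri d s t (m+2)) 0 j.succ.succ *
        ((tri d s t (m+2)).submatrix Fin.succ (Fin.succAbove j.succ.succ)).det = 0 := by
    apply Finset.sum_eq_zero
    intro j _
    rw [hz]; ring
  rw [hsum0, add_zero]
  have h00 : (tri d s t (m+2)) 0 0 = d 0 := by simp [tri]
  have h01 : (tri d s t (m+2)) 0 (0:Fin (m+1)).succ = s 0 := by
    simp [tri, Fin.succ]
  have hm1 : (tri d s t (m+2)).submatrix Fin.succ ((0:Fin (m+2)).succAbove)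
      = tri (fun i => d (i+1)) (fun i => s (i+1)) (fun i => t (i+1)) (m+1) := by
    rw [Fin.succAbove_zero]
    ext i j
    simp only [Matrix.submatrix_apply, tri, Matrix.of_apply, Fin.val_succ, add_left_inj]
  -- the j = 1 minor
  have hB : ((tri d s t (m+2)).submatrix Fin.succ ((0:Fin (m+1)).succ.succAbove)).det
      = t 0 * (tri (fun i => d (i+2)) (fun i => s (i+2)) (fun i => t (i+2)) m).det := by
    have h1 : ((0:Fin (m+1)).succ : Fin (m+2)) = 1 := rfl
    rw [h1, Matrix.det_succ_column_zero, Fin.sum_univ_succ]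
    have hz2 : ∀ i : Fin m,
        ((tri d s t (m+2)).submatrix Fin.succ ((1:Fin (m+2)).succAbove)) i.succ 0 = 0 := by
      intro i
      simp only [Matrix.submatrix_apply, hsA0, tri, Matrix.of_apply, Fin.val_succ, Fin.val_zero]
      simp
    have hsum2 : ∑ i : Fin m, (-1:ℂ) ^ ((i.succ : Fin (m+1)) : ℕ) *
        ((tri d s t (m+2)).submatrix Fin.succ ((1:Fin (m+2)).succAbove)) i.succ 0 *
        (((tri d s t (m+2)).submatrix Fin.succ ((1:Fin (m+2)).succAbove)).submatrix
          i.succ.succAbove Fin.succ).det = 0 := by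
      apply Finset.sum_eq_zero
      intro i _
      rw [hz2]; ring
    rw [hsum2, add_zero]
    have hB00 : ((tri d s t (m+2)).submatrix Fin.succ ((1:Fin (m+2)).succAbove)) 0 0 = t 0 := by
      simp only [Matrix.submatrix_apply, hsA0, tri, Matrix.of_apply]
      simp
    have hBm : (((tri d s t (m+2)).submatrix Fin.succ ((1:Fin (m+2)).succAbove)).submatrix
          (Fin.succAbove 0) Fin.succ)
        = tri (fun i => d (i+2)) (fun i => s (i+2)) (fun i => t (i+2)) m := by
      rw [Fin.succAbove_zero]
      ext i j
      simp only [Matrix.submatrix_apply, hsA1, tri, Matrix.of_apply, Fin.val_succ, add_left_inj]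
    rw [hB00, hBm]
    simp
  rw [h00, h01, hm1, hB]
  simp only [Fin.val_zero, Fin.val_succ, pow_zero, pow_one]
  ring

lemma G_formula (m : ℕ) : ∀ (d s t : ℕ → ℂ),
    ![(tri d s t (m+1)).det,
      (tri (fun i => d (i+1)) (fun i => s (i+1)) (fun i => t (i+1)) m).det]
    = (((List.range m).map (fun j => !![d j, -(s j * t j); (1:ℂ), 0])).prod).mulVec ![d m, 1] := by
  induction m with
  | zero =>
      intro d s t
      have h1 : (tri d s t 1).det = d 0 := by
        rw [Matrix.det_fin_one]; simp [tri]
      have h0 : (tri (fun i => d (i+1)) (fun i => s (i+1)) (fun i => t (i+1)) 0).det = 1 :=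
        Matrix.det_fin_zero
      simp [h1, h0, tri]
  | succ m ih =>
      intro d s t
      have hrec := tri_det_rec d s t m
      have ih' := ih (fun i => d (i+1)) (fun i => s (i+1)) (fun i => t (i+1))
      rw [List.range_succ_eq_map, List.map_cons, List.prod_cons, ← Matrix.mulVec_mulVec,
        List.map_map]
      have hmap : ((fun j => !![d j, -(s j * t j); (1:ℂ), 0]) ∘ Nat.succ)
          = fun j => !![d (j+1), -(s (j+1) * t (j+1)); (1:ℂ), 0] := rfl
      rw [hmap, ← ih']
      funext i
      fin_cases i
      · simp [Matrix.mulVec, dotProduct, Fin.sum_univ_two, hrec]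
        ring
      · simp [Matrix.mulVec, dotProduct, Fin.sum_univ_two]

lemma prod_range_mod (V : ℕ → Matrix (Fin 2) (Fin 2) ℂ) (k : ℕ) (m r : ℕ) :
    ((List.range (m * k + r)).map (fun j => V (j % k))).prod
      = (((List.range k).map (fun j => V (j % k))).prod) ^ m *
        ((List.range r).map (fun j => V (j % k))).prod := by
  induction m with
  | zero => simp
  | succ m ih =>
      have h : (m+1) * k + r = k + (m * k + r) := by ring
      rw [h, List.range_add, List.map_append, List.prod_append, List.map_map]
      have hmap : ((fun j => V (j % k)) ∘ (fun x => k + x)) = fun j => V (j % k) := by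
        funext j
        simp [Nat.add_mod_left]
      rw [hmap, ih, pow_succ']
      rw [mul_assoc]

lemma key (k : ℕ) (a x y : ℕ → ℂ) (z : ℂ) (N : ℕ) (hN : 1 ≤ N) :
    ![(z • (1 : Matrix (Fin N) (Fin N) ℂ) + kToeplitz k a x y N).det,
      (z • (1 : Matrix (Fin (N-1)) (Fin (N-1)) ℂ) + (kToeplitz k a x y N).submatrix
        (fun i : Fin (N-1) => (⟨(i:ℕ)+1, by have := i.isLt; omega⟩ : Fin N))
        (fun j : Fin (N-1) => (⟨(j:ℕ)+1, by have := j.isLt; omega⟩ : Fin N))).det]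
    = (((List.range (N-1)).map
          (fun j => U1 (a (j % k)) (x (j % k) * y (j % k)) z)).prod).mulVec
        ![z + a ((N-1) % k), 1] := by
  obtain ⟨m, rfl⟩ : ∃ m, N = m + 1 := ⟨N - 1, by omega⟩
  set d : ℕ → ℂ := fun j => z + a (j % k) with hd
  set s : ℕ → ℂ := fun j => x (j % k) with hs
  set t : ℕ → ℂ := fun j => y (j % k) with ht
  have h1 : z • (1 : Matrix (Fin (m+1)) (Fin (m+1)) ℂ) + kToeplitz k a x y (m+1)
      = tri d s t (m+1) := by
    ext i j
    simp only [Matrix.add_apply, Matrix.smul_apply, Matrix.one_apply, kToeplitz, tri,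
      Matrix.of_apply, smul_eq_mul, hd, hs, ht]
    rcases eq_or_ne (i : ℕ) (j : ℕ) with h | h
    · have : i = j := Fin.ext h
      subst this
      simp
    · have : i ≠ j := fun hc => h (by rw [hc])
      simp [h, this]
  have h2 : z • (1 : Matrix (Fin (m+1-1)) (Fin (m+1-1)) ℂ) + (kToeplitz k a x y (m+1)).submatrix
        (fun i : Fin (m+1-1) => (⟨(i:ℕ)+1, by have := i.isLt; omega⟩ : Fin (m+1)))
        (fun j : Fin (m+1-1) => (⟨(j:ℕ)+1, by have := j.isLt; omega⟩ : Fin (m+1)))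
      = tri (fun i => d (i+1)) (fun i => s (i+1)) (fun i => t (i+1)) m := by
    ext i j
    simp only [Matrix.add_apply, Matrix.smul_apply, Matrix.one_apply, kToeplitz, tri,
      Matrix.submatrix_apply, Matrix.of_apply, smul_eq_mul, hd, hs, ht, add_left_inj]
    rcases eq_or_ne (i : ℕ) (j : ℕ) with h | h
    · have : i = j := Fin.ext h
      subst this
      simp
    · have : i ≠ j := fun hc => h (by rw [hc])
      simp [h, this]
  have hU : ∀ j : ℕ, U1 (a (j % k)) (x (j % k) * y (j % k)) z
      = !![d j, -(s j * t j); (1:ℂ), 0] := by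
    intro j; simp [U1, hd, hs, ht]
  have := G_formula m d s t
  simp only [Nat.add_sub_cancel]
  rw [h1, h2]
  refine this.trans ?_
  have hm : (fun j => !![d j, -(s j * t j); (1:ℂ), 0])
      = fun j => U1 (a (j % k)) (x (j % k) * y (j % k)) z := by
    funext j; rw [hU]
  rw [hm]

/-- **Corollary 2**: for every `n ≥ 1` and every `z ∈ ℂ`,
`(p_n(z), q_n(z))ᵀ = U_k(z)^{n-1} · U₁(a_1,u_1)(z) ⋯ U₁(a_{k-1},u_{k-1})(z) · (z + a_k, 1)ᵀ`
(for `k = 1` the product `U₁(a_1,u_1) ⋯ U₁(a_{k-1},u_{k-1})` is empty, i.e. the identity). -/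
theorem kToeplitz_matrix_power_formula
    (k : ℕ) (hk : 1 ≤ k) (a x y : ℕ → ℂ) (n : ℕ) (hn : 1 ≤ n) (z : ℂ) :
    ![pPoly k a x y n z, qPoly k a x y n z] =
      ((Uk k a x y z) ^ (n - 1) *
        ((List.range (k - 1)).map (fun j => U1 (a j) (x j * y j) z)).prod).mulVec
        ![z + a (k - 1), 1] := by
  have hN : 1 ≤ n * k := by
    have := Nat.mul_le_mul hn hk
    simpa using this
  have hkey := key k a x y z (n * k) hN
  have hnk : n * k - 1 = (n - 1) * k + (k - 1) := by
    obtain ⟨n', rfl⟩ : ∃ n', n = n' + 1 := ⟨n - 1, by omega⟩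
    rw [Nat.succ_mul]
    simp only [Nat.add_sub_cancel]
    omega
  have hmod : (n * k - 1) % k = k - 1 := by
    rw [hnk, add_comm, Nat.add_mul_mod_self_right, Nat.mod_eq_of_lt (by omega)]
  have hprod : ((List.range (n * k - 1)).map
        (fun j => U1 (a (j % k)) (x (j % k) * y (j % k)) z)).prod
      = (Uk k a x y z) ^ (n - 1) *
        ((List.range (k - 1)).map (fun j => U1 (a j) (x j * y j) z)).prod := by
    rw [hnk, prod_range_mod (fun j => U1 (a j) (x j * y j) z) k (n-1) (k-1)]
    congr 1
    · congr 1
      unfold Uk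
      apply congrArg
      apply List.map_congr_left
      intro j hj
      rw [Nat.mod_eq_of_lt (List.mem_range.mp hj)]
    · apply congrArg
      apply List.map_congr_left
      intro j hj
      have : j < k := by have := List.mem_range.mp hj; omega
      rw [Nat.mod_eq_of_lt this]
  unfold pPoly qPoly
  rw [hkey, hprod, hmod]
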